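/- A matching M in a finite simple graph G is uniquely restricted if and only if there is no M-alternating cycle in G, where an M-alternating cycle is a cycle in G every second edge of which belongs to M. -/

import Mathlib

variable {V : Type*}

/-- A matching in `G`: a set of pairwise non-adjacent edges of `G`. -/
def IsMatching (G : SimpleGraph V) (M : Finset (Sym2 V)) : Prop :=
  (M : Set (Sym2 V)) ⊆ G.edgeSet ∧
    ∀ e ∈ M, ∀ f ∈ M, e ≠ f → ∀ v : V, v ∈ e → v ∉ f

/-- `V(M)`: the set of vertices incident with an edge of `M`. -/
def mVerts (M : Finset (Sym2 V)) : Set V := {v | ∃ e ∈ M, v ∈ e}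

/-- An `M`-alternating cycle: a cycle in `G` every second edge of which belongs to `M`,
i.e. the membership in `M` of the edges alternates around the cycle (including the
wrap-around between the last and the first edge). -/
def IsAlternatingCycle (G : SimpleGraph V) (M : Finset (Sym2 V)) {v : V}
    (c : G.Walk v v) : Prop :=
  c.IsCycle ∧ List.Chain' (fun e f => (e ∈ M ↔ f ∉ M)) (c.edges ++ c.edges.take 1)

open SimpleGraph

section Aux
variable {G : SimpleGraph V} {M : Finset (Sym2 V)}

lemma matching_unique (hM : IsMatching G M) {e f : Sym2 V} (he : e ∈ M) (hf : f ∈ M)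
    {v : V} (hv : v ∈ e) (hv' : v ∈ f) : e = f := by
  by_contra h; exact hM.2 e he f hf h v hv hv'

open Classical in
noncomputable def partnerM (M : Finset (Sym2 V)) (v : V) : V :=
  if h : ∃ e ∈ M, v ∈ e then Sym2.Mem.other h.choose_spec.2 else v

lemma partner_spec {v : V} (hv : ∃ e ∈ M, v ∈ e) :
    s(v, partnerM M v) ∈ M := by
  classical
  rw [partnerM, dif_pos hv, Sym2.other_spec]
  exact hv.choose_spec.1

lemma partner_eq (hM : IsMatching G M) {e : Sym2 V} (he : e ∈ M) {v : V} (hv : v ∈ e) :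
    e = s(v, partnerM M v) :=
  matching_unique hM he (partner_spec ⟨e, he, hv⟩) hv (Sym2.mem_mk_left _ _)

lemma partner_ne (hM : IsMatching G M) {v : V} (hv : ∃ e ∈ M, v ∈ e) :
    partnerM M v ≠ v := by
  have h1 := partner_spec hv
  have h2 : ¬ (s(v, partnerM M v)).IsDiag := by
    have := hM.1 h1
    rw [mem_edgeSet] at this
    simpa [Sym2.mk_isDiag_iff] using this.ne
  intro h; exact h2 (by simp [h])

lemma partner_adj (hM : IsMatching G M) {v : V} (hv : ∃ e ∈ M, v ∈ e) :
    G.Adj v (partnerM M v) := by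
  have := hM.1 (partner_spec hv); rwa [mem_edgeSet] at this

lemma partner_of_mem (hM : IsMatching G M) {a b : V} (h : s(a, b) ∈ M) :
    partnerM M a = b := by
  have he := partner_eq hM h (Sym2.mem_mk_left _ _)
  have hne : a ≠ b := by
    have := hM.1 h; rw [mem_edgeSet] at this; exact this.ne
  rw [Sym2.eq_iff] at he
  rcases he with ⟨-, h2⟩ | ⟨h1, h2⟩
  · exact h2.symm
  · exact h1.symm.trans h2.symm

lemma exists_walk (G : SimpleGraph V) : ∀ (l : List V) (u v : V),
    List.Chain G.Adj u (l ++ [v]) → ∃ w : G.Walk u v, w.support = u :: (l ++ [v]) ∧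
      w.edges = List.zipWith (fun x y => s(x, y)) (u :: (l ++ [v])) (l ++ [v])
  | [], u, v, h => by
    rw [List.nil_append, List.Chain, List.chain_cons] at h
    exact ⟨Walk.cons h.1 Walk.nil, by simp, by simp⟩
  | x :: l, u, v, h => by
    rw [List.cons_append, List.Chain, List.chain_cons] at h
    obtain ⟨w, hs, he⟩ := exists_walk G l x v h.2
    exact ⟨Walk.cons h.1 w, by simp [hs], by simp [he, hs]⟩

end Aux

lemma cycle_local {G : SimpleGraph V} {M : Finset (Sym2 V)} {v : V} {c : G.Walk v v}
    (hc : c.IsCycle)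
    (halt : List.Chain' (fun e f => (e ∈ M ↔ f ∉ M)) (c.edges ++ c.edges.take 1))
    {x : V} {f : Sym2 V} (hf : f ∈ c.edges) (hx : x ∈ f) :
    ∃ e₁ e₂, e₁ ∈ c.edges ∧ e₂ ∈ c.edges ∧ (e₁ ∈ M ↔ e₂ ∉ M) ∧ x ∈ e₁ ∧ x ∈ e₂ ∧
      ∀ g ∈ c.edges, x ∈ g → g = e₁ ∨ g = e₂ := by
  set n := c.length with hn
  have hn3 : 3 ≤ n := hc.three_le_length
  have hE : c.edges.length = n := c.length_edges
  have hS : c.support.length = n + 1 := c.length_support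
  have hD : c.darts.length = n := c.length_darts
  set S : ℕ → V := fun i => c.support.getD i v with hSdef
  set E : ℕ → Sym2 V := fun i => c.edges.getD i f with hEdef
  have key : ∀ i, i < n → E i = s(S i, S (i+1)) := by
    intro i hi
    have h1 : E i = c.edges[i]'(by omega) := List.getD_eq_getElem _ _ (by omega)
    have h2 : S i = c.support[i]'(by omega) := List.getD_eq_getElem _ _ (by omega)
    have h3 : S (i+1) = c.support[i+1]'(by omega) := List.getD_eq_getElem _ _ (by omega)
    rw [h1, h2, h3]
    have e1 : c.edges[i]'(by omega) = (c.darts[i]'(by omega)).edge := by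
      simp [SimpleGraph.Walk.edges]
    have e2 : (c.darts[i]'(by omega)).fst = c.support[i]'(by omega) := by
      have h := c.map_fst_darts
      calc (c.darts[i]'(by omega)).fst
          = (c.darts.map (·.fst))[i]'(by simp [hD]; omega) := by simp
        _ = c.support.dropLast[i]'(by simp [hS]; omega) := by rw [List.getElem_of_eq h]
        _ = c.support[i]'(by omega) := List.getElem_dropLast _
    have e3 : (c.darts[i]'(by omega)).snd = c.support[i+1]'(by omega) := by
      have h := c.map_snd_darts
      calc (c.darts[i]'(by omega)).snd
          = (c.darts.map (·.snd))[i]'(by simp [hD]; omega) := by simp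
        _ = c.support.tail[i]'(by simp [hS]; omega) := by rw [List.getElem_of_eq h]
        _ = c.support[i+1]'(by omega) := List.getElem_tail ..
    rw [e1, ← e2, ← e3]
    rfl
  have inj : ∀ i j, 1 ≤ i → i ≤ n → 1 ≤ j → j ≤ n → S i = S j → i = j := by
    intro i j hi1 hin hj1 hjn hij
    have ht : c.support.tail.Nodup := hc.support_nodup
    have hti : S i = c.support.tail[i-1]'(by simp [hS]; omega) := by
      rw [List.getElem_tail]
      have h : i - 1 + 1 = i := by omega
      simp only [h]
      exact List.getD_eq_getElem _ _ (by omega)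
    have htj : S j = c.support.tail[j-1]'(by simp [hS]; omega) := by
      rw [List.getElem_tail]
      have h : j - 1 + 1 = j := by omega
      simp only [h]
      exact List.getD_eq_getElem _ _ (by omega)
    rw [hti, htj] at hij
    have := (List.Nodup.getElem_inj_iff ht).mp hij
    omega
  have S0 : S 0 = v := by
    show c.support.getD 0 v = v
    rw [c.support_eq_cons]; rfl
  have Sn : S n = v := by
    have h1 : S n = c.support[n]'(by omega) := List.getD_eq_getElem _ _ (by omega)
    rw [h1]
    have := c.getLast_support
    rw [List.getLast_eq_getElem] at this
    simpa [hS] using this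
  have S0n : S n = S 0 := by rw [S0, Sn]
  -- alternation
  have hlen : (c.edges ++ c.edges.take 1).length = n + 1 := by
    simp [hE]; omega
  have halt' : ∀ i, (hi : i < n) → (((c.edges ++ c.edges.take 1)[i]'(by omega) ∈ M) ↔
      ((c.edges ++ c.edges.take 1)[i+1]'(by omega) ∉ M)) := by
    rw [List.Chain', List.isChain_iff_getElem] at halt
    intro i hi
    have := halt i (by omega)
    simpa [List.get_eq_getElem] using this
  have A1 : ∀ i, i + 1 < n → (E i ∈ M ↔ E (i+1) ∉ M) := by
    intro i hi
    have h1 : E i = (c.edges ++ c.edges.take 1)[i]'(by omega) := by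
      rw [List.getElem_append_left (by omega)]
      exact List.getD_eq_getElem _ _ (by omega)
    have h2 : E (i+1) = (c.edges ++ c.edges.take 1)[i+1]'(by omega) := by
      rw [List.getElem_append_left (by omega)]
      exact List.getD_eq_getElem _ _ (by omega)
    rw [h1, h2]; exact halt' i (by omega)
  have A2 : E (n-1) ∈ M ↔ E 0 ∉ M := by
    have h1 : E (n-1) = (c.edges ++ c.edges.take 1)[n-1]'(by omega) := by
      rw [List.getElem_append_left (by omega)]
      exact List.getD_eq_getElem _ _ (by omega)
    have h2 : E 0 = (c.edges ++ c.edges.take 1)[n]'(by omega) := by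
      rw [List.getElem_append_right (by omega : c.edges.length ≤ n)]
      have h : n - c.edges.length = 0 := by omega
      simp only [h, List.getElem_take]
      exact List.getD_eq_getElem _ _ (by omega)
    rw [h1, h2]
    have := halt' (n-1) (by omega)
    have hnn : n - 1 + 1 = n := by omega
    simp only [hnn] at this
    exact this
  have Emem : ∀ i, i < n → E i ∈ c.edges := by
    intro i hi
    have h1 : E i = c.edges[i]'(by omega) := List.getD_eq_getElem _ _ (by omega)
    rw [h1]; exact List.getElem_mem _
  have exists_idx : ∀ g ∈ c.edges, ∃ j, j < n ∧ g = E j := by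
    intro g hg
    obtain ⟨j, hj, hgj⟩ := List.getElem_of_mem hg
    exact ⟨j, by omega, by rw [← hgj]; exact (List.getD_eq_getElem _ _ hj).symm⟩
  have xmem : ∀ i, i < n → (x ∈ E i ↔ (x = S i ∨ x = S (i+1))) := by
    intro i hi
    rw [key i hi, Sym2.mem_iff]
  -- find position of x
  obtain ⟨j, hj, hfj⟩ := exists_idx f hf
  rw [hfj] at hx
  have hxi : ∃ i, 1 ≤ i ∧ i ≤ n ∧ x = S i := by
    rcases (xmem j hj).mp hx with h | h
    · rcases Nat.eq_zero_or_pos j with rfl | hj1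
      · exact ⟨n, by omega, by omega, by rw [h, ← S0n]⟩
      · exact ⟨j, hj1, by omega, h⟩
    · exact ⟨j+1, by omega, by omega, h⟩
  obtain ⟨i, hi1, hin, hxS⟩ := hxi
  rcases Nat.lt_or_ge i n with hilt | hige
  · -- case i < n
    refine ⟨E (i-1), E i, Emem _ (by omega), Emem _ hilt, ?_, ?_, ?_, ?_⟩
    · have := A1 (i-1) (by omega)
      rwa [Nat.sub_add_cancel hi1] at this
    · rw [key (i-1) (by omega), Nat.sub_add_cancel hi1, Sym2.mem_iff]
      right; exact hxS
    · rw [xmem i hilt]; left; exact hxS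
    · intro g hg hxg
      obtain ⟨k, hk, rfl⟩ := exists_idx g hg
      rcases (xmem k hk).mp hxg with h | h
      · rcases Nat.eq_zero_or_pos k with rfl | hk1
        · exfalso
          have : S n = S i := by rw [S0n, ← h, hxS]
          have := inj n i (by omega) le_rfl hi1 hin this
          omega
        · have : k = i := inj k i hk1 (by omega) hi1 hin (h.symm.trans hxS).symm.symm
          right; rw [this]
      · have : k + 1 = i := inj (k+1) i (by omega) (by omega) hi1 hin (h.symm.trans hxS).symm.symm
        left; rw [← this]; simp
  · -- case i = n
    have hieq : i = n := by omega
    subst hieq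
    refine ⟨E (n-1), E 0, Emem _ (by omega), Emem _ (by omega), A2, ?_, ?_, ?_⟩
    · rw [key (n-1) (by omega), Sym2.mem_iff, Nat.sub_add_cancel (by omega)]
      right; exact hxS
    · rw [xmem 0 (by omega)]; left; rw [hxS, S0n]
    · intro g hg hxg
      obtain ⟨k, hk, rfl⟩ := exists_idx g hg
      rcases (xmem k hk).mp hxg with h | h
      · rcases Nat.eq_zero_or_pos k with rfl | hk1
        · right; rfl
        · exfalso
          have : k = n := inj k n hk1 (by omega) (by omega) le_rfl (h.symm.trans hxS).symm.symm
          omega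
      · have : k + 1 = n := inj (k+1) n (by omega) (by omega) (by omega) le_rfl (h.symm.trans hxS).symm.symm
        left; rw [← this]; simp

lemma exists_other_matching {G : SimpleGraph V} {M : Finset (Sym2 V)} (hM : IsMatching G M)
    {v : V} {c : G.Walk v v} (hc : IsAlternatingCycle G M c) :
    ∃ M' : Finset (Sym2 V), IsMatching G M' ∧ M' ≠ M ∧ mVerts M' = mVerts M := by
  classical
  obtain ⟨hcyc, halt⟩ := hc
  have facta : ∀ g ∈ c.edges, g ∉ M → ∀ x ∈ g, ∃ h, h ∈ c.edges ∧ h ∈ M ∧ x ∈ h := by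
    intro g hg hgM x hx
    obtain ⟨e₁, e₂, he₁, he₂, hiff, hx₁, hx₂, huniq⟩ := cycle_local hcyc halt hg hx
    rcases huniq g hg hx with rfl | rfl
    · exact ⟨e₂, he₂, by tauto, hx₂⟩
    · exact ⟨e₁, he₁, by tauto, hx₁⟩
  have factb : ∀ g ∈ c.edges, g ∈ M → ∀ x ∈ g, ∃ h, h ∈ c.edges ∧ h ∉ M ∧ x ∈ h := by
    intro g hg hgM x hx
    obtain ⟨e₁, e₂, he₁, he₂, hiff, hx₁, hx₂, huniq⟩ := cycle_local hcyc halt hg hx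
    rcases huniq g hg hx with rfl | rfl
    · exact ⟨e₂, he₂, by tauto, hx₂⟩
    · exact ⟨e₁, he₁, by tauto, hx₁⟩
  have factc : ∀ g ∈ c.edges, ∀ h ∈ c.edges, g ≠ h → (g ∈ M ↔ h ∈ M) →
      ∀ x ∈ g, x ∉ h := by
    intro g hg h hh hne hsame x hxg hxh
    obtain ⟨e₁, e₂, he₁, he₂, hiff, hx₁, hx₂, huniq⟩ := cycle_local hcyc halt hg hxg
    have h1 := huniq g hg hxg
    have h2 := huniq h hh hxh
    rcases h1 with rfl | rfl <;> rcases h2 with rfl | rfl <;> tauto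
  set Es : Finset (Sym2 V) := c.edges.toFinset with hEs
  have memM' : ∀ e : Sym2 V, e ∈ (M \ Es) ∪ (Es \ M) ↔
      ((e ∈ M ∧ e ∉ c.edges) ∨ (e ∈ c.edges ∧ e ∉ M)) := by
    intro e; simp [hEs, Finset.mem_union, Finset.mem_sdiff, List.mem_toFinset]
  refine ⟨(M \ Es) ∪ (Es \ M), ⟨?_, ?_⟩, ?_, ?_⟩
  · intro e he
    rcases (memM' e).mp he with ⟨h1, -⟩ | ⟨h1, -⟩
    · exact hM.1 h1
    · exact c.edges_subset_edgeSet h1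
  · intro e he f hf hef x hxe hxf
    rcases (memM' e).mp he with ⟨he1, he2⟩ | ⟨he1, he2⟩ <;>
      rcases (memM' f).mp hf with ⟨hf1, hf2⟩ | ⟨hf1, hf2⟩
    · exact hM.2 e he1 f hf1 hef x hxe hxf
    · obtain ⟨h, hh1, hh2, hh3⟩ := facta f hf1 hf2 x hxf
      have : e ≠ h := fun h' => he2 (h' ▸ hh1)
      exact hM.2 e he1 h hh2 this x hxe hh3
    · obtain ⟨h, hh1, hh2, hh3⟩ := facta e he1 he2 x hxe
      have : f ≠ h := fun h' => hf2 (h' ▸ hh1)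
      exact hM.2 f hf1 h hh2 this x hxf hh3
    · exact factc e he1 f hf1 hef (by tauto) x hxe hxf
  · intro hMeq
    have hne : c.edges ≠ [] := by
      have := hcyc.three_le_length
      intro h
      have := c.length_edges
      rw [h] at this
      simp at this; omega
    obtain ⟨g, hg⟩ := List.exists_mem_of_ne_nil _ hne
    by_cases hgM : g ∈ M
    · have : g ∉ (M \ Es) ∪ (Es \ M) := by
        rw [memM']; tauto
      rw [hMeq] at this; exact this hgM
    · have : g ∈ (M \ Es) ∪ (Es \ M) := by
        rw [memM']; tauto
      rw [hMeq] at this; exact hgM this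
  · ext x
    constructor
    · rintro ⟨e, he, hx⟩
      rcases (memM' e).mp he with ⟨h1, -⟩ | ⟨h1, h2⟩
      · exact ⟨e, h1, hx⟩
      · obtain ⟨h, hh1, hh2, hh3⟩ := facta e h1 h2 x hx
        exact ⟨h, hh2, hh3⟩
    · rintro ⟨e, he, hx⟩
      by_cases hEse : e ∈ c.edges
      · obtain ⟨h, hh1, hh2, hh3⟩ := factb e hEse he x hx
        exact ⟨h, (memM' h).mpr (Or.inr ⟨hh1, hh2⟩), hh3⟩
      · exact ⟨e, (memM' e).mpr (Or.inl ⟨he, hEse⟩), hx⟩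

lemma exists_alt_cycle {V : Type*} [Fintype V] {G : SimpleGraph V} {M M' : Finset (Sym2 V)}
    (hM : IsMatching G M) (hM' : IsMatching G M') (hne : M' ≠ M) (hV : mVerts M' = mVerts M) :
    ∃ (v : V) (c : G.Walk v v), IsAlternatingCycle G M c := by
  classical
  -- find a starting edge in M \ M'
  have hMM' : ∃ e, e ∈ M ∧ e ∉ M' := by
    by_contra h
    push_neg at h
    obtain ⟨e, he', heM⟩ : ∃ e, e ∈ M' ∧ e ∉ M := by
      by_contra h2
      push_neg at h2
      exact hne (Finset.Subset.antisymm h2 h)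
    have hx : e.out.1 ∈ e := Sym2.out_fst_mem e
    have hxm : e.out.1 ∈ mVerts M' := ⟨e, he', hx⟩
    rw [hV] at hxm
    obtain ⟨g, hg, hgx⟩ := hxm
    exact hM'.2 g (h g hg) e he' (fun hge => heM (hge ▸ hg)) _ hgx hx
  obtain ⟨e₀, he₀M, he₀M'⟩ := hMM'
  revert he₀M he₀M'
  induction e₀ using Sym2.ind with
  | _ a b =>
  intro he₀M he₀M'
  -- the alternating walk
  set f : ℕ → V :=
    fun n => Nat.rec a (fun k ih => if Even k then partnerM M ih else partnerM M' ih) n with hfd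
  have hf0 : f 0 = a := rfl
  have hfS : ∀ n, f (n+1) = if Even n then partnerM M (f n) else partnerM M' (f n) :=
    fun n => rfl
  have inv : ∀ n, (Even n → s(f n, f (n+1)) ∈ M ∧ s(f n, f (n+1)) ∉ M') ∧
      (¬Even n → s(f n, f (n+1)) ∈ M' ∧ s(f n, f (n+1)) ∉ M) := by
    intro n
    induction n with
    | zero =>
      refine ⟨fun _ => ?_, fun h => absurd Even.zero h⟩
      rw [hfS 0, if_pos Even.zero, hf0, partner_of_mem hM he₀M]
      exact ⟨he₀M, he₀M'⟩
    | succ n ih =>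
      by_cases hn : Even n
      · obtain ⟨h1, h2⟩ := ih.1 hn
        have hv1 : f (n+1) ∈ mVerts M := ⟨_, h1, Sym2.mem_mk_right _ _⟩
        rw [← hV] at hv1
        obtain ⟨e, he, hve⟩ := hv1
        have hstep : f (n+2) = partnerM M' (f (n+1)) := by
          rw [hfS (n+1), if_neg (by simp [Nat.even_add_one, hn])]
        have hmem : s(f (n+1), f (n+2)) ∈ M' := by
          rw [hstep]; exact partner_spec ⟨e, he, hve⟩
        have hnot : s(f (n+1), f (n+2)) ∉ M := by
          intro hmm
          have heq := matching_unique hM hmm h1 (Sym2.mem_mk_left _ _) (Sym2.mem_mk_right _ _)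
          rw [heq] at hmem
          exact h2 hmem
        exact ⟨fun h => absurd h (by simp [Nat.even_add_one, hn]),
          fun _ => ⟨hmem, hnot⟩⟩
      · obtain ⟨h1, h2⟩ := ih.2 hn
        have hv1 : f (n+1) ∈ mVerts M' := ⟨_, h1, Sym2.mem_mk_right _ _⟩
        rw [hV] at hv1
        obtain ⟨e, he, hve⟩ := hv1
        have hstep : f (n+2) = partnerM M (f (n+1)) := by
          rw [hfS (n+1), if_pos (Nat.even_add_one.mpr hn)]
        have hmem : s(f (n+1), f (n+2)) ∈ M := by
          rw [hstep]; exact partner_spec ⟨e, he, hve⟩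
        have hnot : s(f (n+1), f (n+2)) ∉ M' := by
          intro hmm
          have heq := matching_unique hM' hmm h1 (Sym2.mem_mk_left _ _) (Sym2.mem_mk_right _ _)
          rw [heq] at hmem
          exact h2 hmem
        exact ⟨fun _ => ⟨hmem, hnot⟩,
          fun h => absurd (Nat.even_add_one.mpr hn) h⟩
  have hadj : ∀ n, G.Adj (f n) (f (n+1)) := by
    intro n
    by_cases hn : Even n
    · have := hM.1 ((inv n).1 hn).1; rwa [mem_edgeSet] at this
    · have := hM'.1 ((inv n).2 hn).1; rwa [mem_edgeSet] at this
  have hne' : ∀ n, f n ≠ f (n+1) := fun n => (hadj n).ne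
  have U1 : ∀ n, Even n → partnerM M (f n) = f (n+1) := by
    intro n hn; rw [hfS n, if_pos hn]
  have U2 : ∀ n, ¬Even n → partnerM M' (f n) = f (n+1) := by
    intro n hn; rw [hfS n, if_neg hn]
  have U3 : ∀ n, Even n → partnerM M (f (n+1)) = f n := by
    intro n hn
    have h1 := ((inv n).1 hn).1
    rw [Sym2.eq_swap] at h1
    exact partner_of_mem hM h1
  have U4 : ∀ n, ¬Even n → partnerM M' (f (n+1)) = f n := by
    intro n hn
    have h1 := ((inv n).2 hn).1
    rw [Sym2.eq_swap] at h1
    exact partner_of_mem hM' h1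
  -- first repeated vertex
  have hrep : ∃ n, ∃ s, s < n ∧ f s = f n := by
    obtain ⟨i, j, hij, hfij⟩ := Finite.exists_ne_map_eq_of_infinite f
    rcases hij.lt_or_gt with h | h
    · exact ⟨j, i, h, hfij⟩
    · exact ⟨i, j, h, hfij.symm⟩
  set t := Nat.find hrep with ht
  obtain ⟨s, hst, hfst⟩ := Nat.find_spec hrep
  have finj : ∀ i j, i < j → j < t → f i ≠ f j := by
    intro i j h1 h2 hf
    exact Nat.find_min hrep h2 ⟨i, h1, hf⟩
  obtain ⟨t1, ht1⟩ : ∃ t1, t = t1 + 1 := ⟨t - 1, by omega⟩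
  have hfst' : f s = f (t1 + 1) := by rw [← ht1]; exact hfst
  -- the first repeat is the start
  have hs0 : s = 0 := by
    by_contra hs
    have hs1 : 1 ≤ s := by omega
    have hs2 : s + 2 ≤ t := by
      rcases Nat.lt_or_ge (s+1) t with h | h
      · omega
      · have h3 : s + 1 = t := by omega
        have h4 : f s = f (s+1) := by rw [h3]; exact hfst
        exact absurd h4 (hne' s)
    have ht1lt : t1 < t := by omega
    by_cases hpt : Even t1
    · have hp : partnerM M (f s) = f t1 := by rw [hfst']; exact U3 t1 hpt
      by_cases hps : Even s
      · have h5 : f (s+1) = f t1 := by rw [← U1 s hps, hp]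
        have h6 : s + 1 ≠ t1 := by
          intro h
          rw [← h] at hpt
          simp [Nat.even_add_one, hps] at hpt
        exact finj (s+1) t1 (by omega) ht1lt h5
      · obtain ⟨s1, hs1'⟩ : ∃ s1, s = s1 + 1 := ⟨s - 1, by omega⟩
        have hps1 : Even s1 := by
          rw [hs1'] at hps; simpa [Nat.even_add_one] using hps
        have h5 : f s1 = f t1 := by
          rw [← U3 s1 hps1, ← hs1', hp]
        exact finj s1 t1 (by omega) ht1lt h5
    · have hp : partnerM M' (f s) = f t1 := by rw [hfst']; exact U4 t1 hpt
      by_cases hps : Even s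
      · obtain ⟨s1, hs1'⟩ : ∃ s1, s = s1 + 1 := ⟨s - 1, by omega⟩
        have hps1 : ¬Even s1 := by
          rw [hs1'] at hps
          exact Nat.even_add_one.mp hps
        have h5 : f s1 = f t1 := by
          rw [← U4 s1 hps1, ← hs1', hp]
        exact finj s1 t1 (by omega) ht1lt h5
      · have h5 : f (s+1) = f t1 := by rw [← U2 s hps, hp]
        have h6 : s + 1 ≠ t1 := by
          intro h
          rw [← h] at hpt
          exact hpt (Nat.even_add_one.mpr hps)
        exact finj (s+1) t1 (by omega) ht1lt h5
  rw [hs0] at hfst hfst'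
  have ht11 : 1 ≤ t1 := by
    by_contra h
    have : t1 = 0 := by omega
    rw [this] at hfst'
    exact hne' 0 hfst'
  -- t1 is odd
  have hf1b : f 1 = b := by
    show f (0+1) = b
    rw [hfS 0, if_pos Even.zero, hf0]
    exact partner_of_mem hM he₀M
  have hpt : ¬ Even t1 := by
    intro hpt
    have hp : partnerM M (f (t1+1)) = f t1 := U3 t1 hpt
    have hp0 : partnerM M (f 0) = f 1 := U1 0 Even.zero
    have h5 : f 1 = f t1 := by rw [← hp, ← hfst', hp0]
    have h6 : 1 ≠ t1 := by
      intro h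
      rw [← h] at hpt
      simp at hpt
    exact finj 1 t1 (by omega) (by omega) h5
  have ht13 : 3 ≤ t1 := by
    rcases Nat.lt_or_ge t1 3 with h | h
    · exfalso
      have h1 : t1 = 1 := by
        have h2 := Nat.not_even_iff.mp hpt
        omega
      have h2 := ((inv 1).2 (by decide)).2
      have h3 : s(f 1, f (1+1)) = s(a, b) := by
        rw [hf1b]
        have h4 : f (1+1) = a := by
          rw [← hf0]
          rw [h1] at hfst'
          exact hfst'.symm
        rw [h4, Sym2.eq_swap]
      rw [h3] at h2
      exact h2 he₀M
    · exact h
  -- build the walk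
  set gE : ℕ → Sym2 V := fun i => s(f i, f (i+1)) with hgE
  have chain : ∀ k m, List.Chain G.Adj (f m) ((List.range' (m+1) k).map f) := by
    intro k
    induction k with
    | zero => intro m; exact List.Chain.nil
    | succ k ih => intro m; exact List.Chain.cons (hadj m) (ih (m+1))
  set l : List V := (List.range' 1 t1).map f with hl
  have hmid : l ++ [a] = (List.range' 1 (t1+1)).map f := by
    rw [List.range'_concat, List.map_append]
    congr 1
    have h1 : 1 + 1 * t1 = t1 + 1 := by omega
    simp only [List.map_cons, List.map_nil, h1]
    rw [← hf0, hfst']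
  have hchain : List.Chain G.Adj a (l ++ [a]) := by
    rw [hmid, ← hf0]
    exact chain (t1+1) 0
  obtain ⟨w, hws, hwe⟩ := exists_walk G l a a hchain
  have hfull : a :: (l ++ [a]) = (List.range' 0 (t1+2)).map f := by
    rw [hmid, ← hf0]
    rfl
  have zipw : ∀ k m, List.zipWith (fun x y => s(x,y)) ((List.range' m (k+1)).map f)
      ((List.range' (m+1) k).map f) = (List.range' m k).map gE := by
    intro k
    induction k with
    | zero => intro m; rfl
    | succ k ih =>
      intro m
      show s(f m, f (m+1)) :: List.zipWith _ ((List.range' (m+1) (k+1)).map f)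
        ((List.range' (m+2) k).map f) = gE m :: (List.range' (m+1) k).map gE
      rw [ih (m+1)]
  have hwe' : w.edges = (List.range' 0 (t1+1)).map gE := by
    rw [hwe, hfull, hmid]
    exact zipw (t1+1) 0
  -- injectivity of f on [1, t]
  have finj2 : ∀ i j, 1 ≤ i → i ≤ t → 1 ≤ j → j ≤ t → f i = f j → i = j := by
    intro i j hi1 hit hj1 hjt hf
    rcases Nat.lt_trichotomy i j with h | h | h
    · exfalso
      rcases Nat.lt_or_ge j t with h2 | h2
      · exact finj i j h h2 hf
      · have hj : j = t := by omega
        subst hj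
        exact finj 0 i hi1 (by omega) (by rw [hfst]; exact hf.symm)
    · exact h
    · exfalso
      rcases Nat.lt_or_ge i t with h2 | h2
      · exact finj j i h h2 hf.symm
      · have hi : i = t := by omega
        subst hi
        exact finj 0 j hj1 (by omega) (by rw [hfst]; exact hf)
  -- support tail is nodup
  have hsupnodup : (l ++ [a]).Nodup := by
    rw [hmid]
    refine List.Nodup.map_on ?_ (List.nodup_range' (s := 1) (n := t1+1))
    intro x hx y hy hxy
    rw [List.mem_range'_1] at hx hy
    exact finj2 x y hx.1 (by omega) hy.1 (by omega) hxy
  -- the edge alternation, for all indices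
  have altR : ∀ i, (gE i ∈ M ↔ gE (i+1) ∉ M) := by
    intro i
    by_cases hi : Even i
    · have h1 : gE i ∈ M := ((inv i).1 hi).1
      have h2 : gE (i+1) ∉ M := ((inv (i+1)).2 (by simp [Nat.even_add_one, hi])).2
      constructor
      · intro _; exact h2
      · intro _; exact h1
    · have h1 : gE i ∉ M := ((inv i).2 hi).2
      have h2 : gE (i+1) ∈ M := ((inv (i+1)).1 (Nat.even_add_one.mpr hi)).1
      constructor
      · intro h; exact absurd h h1
      · intro h; exact absurd h2 h
  -- edges are nodup
  have gEne : ∀ i j, i < j → j < t → gE i ≠ gE j := by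
    intro i j hij hjt heq
    have hmem : f j ∈ gE i := by rw [heq]; exact Sym2.mem_mk_left _ _
    rw [hgE, Sym2.mem_iff] at hmem
    rcases hmem with h | h
    · exact finj i j hij hjt h.symm
    · rcases Nat.lt_or_ge (i+1) j with h2 | h2
      · exact finj (i+1) j h2 hjt h.symm
      · have hij1 : j = i + 1 := by omega
        subst hij1
        by_cases hi : Even i
        · have h1 : gE i ∈ M := ((inv i).1 hi).1
          have h2 : gE (i+1) ∉ M := ((inv (i+1)).2 (by simp [Nat.even_add_one, hi])).2
          rw [← heq] at h2
          exact h2 h1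
        · have h1 : gE i ∉ M := ((inv i).2 hi).2
          have h2 : gE (i+1) ∈ M := ((inv (i+1)).1 (Nat.even_add_one.mpr hi)).1
          rw [← heq] at h2
          exact h1 h2
  have hedgenodup : w.edges.Nodup := by
    rw [hwe']
    refine List.Nodup.map_on ?_ (List.nodup_range' (s := 0) (n := t1+1))
    intro x hx y hy hxy
    rw [List.mem_range'_1] at hx hy
    rcases Nat.lt_trichotomy x y with h | h | h
    · exact absurd hxy (gEne x y h (by omega))
    · exact h
    · exact absurd hxy.symm (gEne y x h (by omega))
  -- the walk is a cycle
  have hnenil : w ≠ SimpleGraph.Walk.nil := by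
    intro h
    have h2 := hwe'
    rw [h] at h2
    simp only [SimpleGraph.Walk.edges_nil] at h2
    have := congrArg List.length h2
    simp [List.length_range'] at this
  have hcyc : w.IsCycle := by
    refine ⟨⟨⟨hedgenodup⟩, hnenil⟩, ?_⟩
    rw [hws]
    simpa using hsupnodup
  -- alternation including wrap-around
  have hgt : gE (t1+1) = gE 0 := by
    show s(f (t1+1), f (t1+1+1)) = s(f 0, f (0+1))
    have hft : f (t1+1) = f 0 := hfst'.symm
    have hEvent : Even (t1+1) := Nat.even_add_one.mpr hpt
    have hft1 : f (t1+1+1) = f (0+1) := by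
      rw [hfS (t1+1), if_pos hEvent, hft, ← U1 0 Even.zero]
    rw [hft, hft1]
  have htake : w.edges.take 1 = [gE 0] := by
    rw [hwe', List.range'_succ, List.map_cons, List.take_succ_cons, List.take_zero]
  have chain2 : ∀ k m, List.Chain' (fun e f => (e ∈ M ↔ f ∉ M)) ((List.range' m k).map gE) := by
    intro k
    induction k with
    | zero => intro m; exact List.isChain_nil
    | succ k ih =>
      intro m
      cases k with
      | zero => exact List.isChain_singleton _
      | succ k' => exact List.IsChain.cons_cons (altR m) (ih (m+1))
  refine ⟨a, w, hcyc, ?_⟩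
  rw [htake, hwe', ← hgt]
  have : (List.range' 0 (t1+1)).map gE ++ [gE (t1+1)] = (List.range' 0 (t1+2)).map gE := by
    have h1 : 0 + 1 * (t1+1) = t1 + 1 := by omega
    conv_rhs => rw [List.range'_concat, h1, List.map_append]
    rfl
  rw [this]
  exact chain2 (t1+2) 0

/-- A matching `M` in `G` is uniquely restricted if and only if there is no
`M`-alternating cycle in `G`. -/
theorem uniquelyRestricted_iff_no_alternating_cycle {V : Type*} [Fintype V]
    (G : SimpleGraph V) (M : Finset (Sym2 V)) (hM : IsMatching G M) :
    (¬ ∃ M' : Finset (Sym2 V), IsMatching G M' ∧ M' ≠ M ∧ mVerts M' = mVerts M) ↔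
      ¬ ∃ (v : V) (c : G.Walk v v), IsAlternatingCycle G M c := by
  constructor
  · intro h hex
    obtain ⟨v, c, hc⟩ := hex
    exact h (exists_other_matching hM hc)
  · intro h hex
    obtain ⟨M', h1, h2, h3⟩ := hex
    exact h (exists_alt_cycle hM h1 h2 h3)
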